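/- Let k ≥ 1 be an integer, s > 0, and g : (0,∞) → [0,∞] measurable. Then ∫_{ℝ^k} g(√(|u|² + s²)) du = σ_{k−1} ∫_s^∞ g(t) (t² − s²)^{k/2 − 1} t dt, where both sides may be +∞. (This computes the k-plane Radon transform of the radial function x ↦ g(|x|) on ℝⁿ over a k-dimensional affine plane at distance s from the origin.) -/

import Mathlib

open MeasureTheory

/-- `sphereVol m` is the surface area `σ_{m-1} = 2 π^{m/2} / Γ(m/2)` of the unit
sphere in `ℝ^m` (so `sphereVol 1 = σ_0 = 2`). -/
noncomputable def sphereVol (m : ℕ) : ℝ := 2 * Real.pi ^ ((m : ℝ) / 2) / Real.Gamma ((m : ℝ) / 2)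

open Set

lemma polar_aux (k : ℕ) (hk : 1 ≤ k) (f : ℝ → ENNReal) (hf : Measurable f) :
    (∫⁻ x : EuclideanSpace ℝ (Fin k), f ‖x‖)
      = (volume : Measure (EuclideanSpace ℝ (Fin k))).toSphere univ *
        ∫⁻ r in Ioi (0:ℝ), ENNReal.ofReal (r ^ (k - 1)) * f r := by
  haveI : Nonempty (Fin k) := ⟨⟨0, hk⟩⟩
  set E := EuclideanSpace ℝ (Fin k)
  haveI : Nontrivial E := inferInstance
  have hdim : Module.finrank ℝ E = k := finrank_euclideanSpace_fin
  calc (∫⁻ x : E, f ‖x‖)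
      = ∫⁻ x : ({(0)}ᶜ : Set E), f ‖x.1‖ ∂((volume : Measure E).comap (↑)) := by
        rw [lintegral_subtype_comap (measurableSet_singleton (0:E)).compl
          (fun x => f ‖x‖), MeasureTheory.restrict_compl_singleton]
    _ = ∫⁻ x : Metric.sphere (0:E) 1 × Ioi (0:ℝ), f x.2
          ∂((volume : Measure E).toSphere.prod (.volumeIoiPow (Module.finrank ℝ E - 1))) := by
        simpa using (volume : Measure E).measurePreserving_homeomorphUnitSphereProd.lintegral_comp_emb
          (Homeomorph.measurableEmbedding _) (f ∘ Subtype.val ∘ Prod.snd)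
    _ = (volume : Measure E).toSphere univ *
          ∫⁻ r : Ioi (0:ℝ), f r ∂(Measure.volumeIoiPow (Module.finrank ℝ E - 1)) := by
        simpa using lintegral_prod_mul (μ := (volume : Measure E).toSphere)
          (ν := Measure.volumeIoiPow (Module.finrank ℝ E - 1))
          (f := fun _ => (1:ENNReal)) (g := fun r : Ioi (0:ℝ) => f r)
          aemeasurable_const (hf.comp measurable_subtype_coe).aemeasurable
    _ = _ := by
        rw [Measure.volumeIoiPow, lintegral_withDensity_eq_lintegral_mul
          (Measure.comap Subtype.val volume)
          (f := fun r : Ioi (0:ℝ) => ENNReal.ofReal (r.1 ^ (Module.finrank ℝ E - 1)))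
          (by exact (measurable_subtype_coe.pow_const _).ennreal_ofReal)
          (g := fun r : Ioi (0:ℝ) => f r) (hf.comp measurable_subtype_coe), hdim]
        simp only [Pi.mul_apply]
        rw [lintegral_subtype_comap measurableSet_Ioi
            (fun r => ENNReal.ofReal (r ^ (k-1)) * f r)]


lemma sub_aux (k : ℕ) (hk : 1 ≤ k) (s : ℝ) (hs : 0 < s) (g : ℝ → ENNReal) :
    (∫⁻ t in Ioi s, g t * ENNReal.ofReal ((t ^ 2 - s ^ 2) ^ ((k : ℝ) / 2 - 1) * t))
      = ∫⁻ r in Ioi (0:ℝ), ENNReal.ofReal (r ^ (k - 1)) * g (Real.sqrt (r ^ 2 + s ^ 2)) := by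
  set φ : ℝ → ℝ := fun r => Real.sqrt (r ^ 2 + s ^ 2) with hφ
  have hφpos : ∀ r : ℝ, 0 < φ r := fun r =>
    Real.sqrt_pos.mpr (by positivity)
  have hφs : ∀ r : ℝ, 0 < r → s < φ r := by
    intro r hr
    have : s = Real.sqrt (s ^ 2) := by rw [Real.sqrt_sq hs.le]
    rw [this]
    exact Real.sqrt_lt_sqrt (by positivity) (by nlinarith)
  have hφsq : ∀ r : ℝ, φ r ^ 2 = r ^ 2 + s ^ 2 := fun r =>
    Real.sq_sqrt (by positivity)
  have himg : φ '' Ioi 0 = Ioi s := by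
    ext t
    constructor
    · rintro ⟨r, hr, rfl⟩
      exact hφs r hr
    · intro ht
      have hst : s < t := ht
      have hts : 0 < t := hs.trans hst
      refine ⟨Real.sqrt (t ^ 2 - s ^ 2), Real.sqrt_pos.mpr (by nlinarith), ?_⟩
      simp only [hφ]
      rw [Real.sq_sqrt (by nlinarith), sub_add_cancel, Real.sqrt_sq hts.le]
  have hinj : InjOn φ (Ioi 0) := by
    intro a ha b hb hab
    have ha' : (0:ℝ) < a := ha
    have hb' : (0:ℝ) < b := hb
    have : a ^ 2 + s ^ 2 = b ^ 2 + s ^ 2 := by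
      have := congrArg (· ^ 2) hab
      simpa [hφsq] using this
    nlinarith
  have hderiv : ∀ r ∈ Ioi (0:ℝ), HasDerivWithinAt φ (r / φ r) (Ioi 0) r := by
    intro r hr
    have h1 : HasDerivAt (fun x : ℝ => x ^ 2 + s ^ 2) (2 * r) r := by
      simpa using ((hasDerivAt_pow 2 r).add_const (s ^ 2))
    have h2 : HasDerivAt Real.sqrt (1 / (2 * Real.sqrt (r ^ 2 + s ^ 2))) (r ^ 2 + s ^ 2) :=
      Real.hasDerivAt_sqrt (by positivity)
    have := h2.comp r h1
    have heq : 1 / (2 * Real.sqrt (r ^ 2 + s ^ 2)) * (2 * r) = r / φ r := by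
      field_simp [hφ]
      have := (hφpos r).ne'
      change r = r * φ r * (φ r)⁻¹
      rw [mul_assoc, mul_inv_cancel₀ this, mul_one]
    rw [heq] at this
    exact this.hasDerivWithinAt
  have key := lintegral_image_eq_lintegral_abs_det_fderiv_mul volume measurableSet_Ioi
    (f' := fun r => (1 : ℝ →L[ℝ] ℝ).smulRight (r / φ r))
    (fun r hr => ((hderiv r hr).hasFDerivWithinAt)) hinj
    (fun t => g t * ENNReal.ofReal ((t ^ 2 - s ^ 2) ^ ((k : ℝ) / 2 - 1) * t))
  rw [himg] at key
  rw [key]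
  refine setLIntegral_congr_fun measurableSet_Ioi (fun r hr => ?_)
  have hr : (0:ℝ) < r := hr
  have ht := hφpos r
  have htne : φ r ≠ 0 := ht.ne'
  have h1 : (φ r) ^ 2 - s ^ 2 = r ^ 2 := by rw [hφsq]; ring
  have habs : |r / φ r| = r / φ r := abs_of_pos (by positivity)
  have h2 : (r ^ 2 : ℝ) ^ ((k : ℝ) / 2 - 1) = r ^ ((k : ℝ) - 2) := by
    rw [← Real.rpow_natCast r 2, ← Real.rpow_mul hr.le]
    congr 1
    push_cast
    ring
  have h3 : r / φ r * (r ^ ((k : ℝ) - 2) * φ r) = r ^ (k - 1 : ℕ) := by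
    rw [← Real.rpow_natCast r (k - 1), Nat.cast_sub hk, Nat.cast_one,
      show ((k:ℝ) - 1) = 1 + ((k:ℝ) - 2) by ring, Real.rpow_add hr, Real.rpow_one]
    field_simp
  rw [ContinuousLinearMap.smulRight_one_eq_toSpanSingleton, ContinuousLinearMap.det_toSpanSingleton, habs, h1, h2, mul_left_comm,
    ← ENNReal.ofReal_mul (by positivity), h3, mul_comm]


lemma sphere_aux (k : ℕ) (hk : 1 ≤ k) :
    (volume : Measure (EuclideanSpace ℝ (Fin k))).toSphere univ
      = ENNReal.ofReal (2 * Real.pi ^ ((k : ℝ) / 2) / Real.Gamma ((k : ℝ) / 2)) := by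
  haveI : Nonempty (Fin k) := ⟨⟨0, hk⟩⟩
  haveI : Nontrivial (EuclideanSpace ℝ (Fin k)) := inferInstance
  rw [Measure.toSphere_apply_univ, EuclideanSpace.volume_ball (Fin k) 0 1, finrank_euclideanSpace_fin]
  simp only [ENNReal.ofReal_one, one_pow, one_mul, Fintype.card_fin]
  rw [← ENNReal.ofReal_natCast k, ← ENNReal.ofReal_mul (by positivity)]
  congr 1
  have hk2 : (0:ℝ) < (k : ℝ) / 2 := by positivity
  have hsq : Real.sqrt Real.pi ^ k = Real.pi ^ ((k : ℝ) / 2) := by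
    rw [Real.sqrt_eq_rpow, ← Real.rpow_natCast (Real.pi ^ ((1:ℝ)/2)) k,
      ← Real.rpow_mul Real.pi_pos.le]
    · congr 1; ring
  have hGamma : Real.Gamma ((k:ℝ) / 2 + 1) = ((k:ℝ)/2) * Real.Gamma ((k:ℝ)/2) :=
    Real.Gamma_add_one hk2.ne'
  have hGpos : 0 < Real.Gamma ((k:ℝ)/2) := Real.Gamma_pos_of_pos hk2
  rw [hsq, hGamma]
  have hkne : (k:ℝ) ≠ 0 := by positivity
  field_simp

/-- Lemma `lem:abel-representation` (Abel representation of the k-plane Radon transform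
of a radial function): for every measurable `g : (0,∞) → [0,∞]` and `s > 0`,
`∫_{ℝ^k} g(√(|u|²+s²)) du = σ_{k-1} ∫_s^∞ g(t) (t²-s²)^{k/2-1} t dt`. -/
theorem stmt_13 (k : ℕ) (hk : 1 ≤ k) (s : ℝ) (hs : 0 < s)
    (g : ℝ → ENNReal) (hg : Measurable g) :
    (∫⁻ u : EuclideanSpace ℝ (Fin k), g (Real.sqrt (‖u‖ ^ 2 + s ^ 2)))
      = ENNReal.ofReal (sphereVol k) *
        ∫⁻ t in Set.Ioi s, g t * ENNReal.ofReal ((t ^ 2 - s ^ 2) ^ ((k : ℝ) / 2 - 1) * t) := by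
  have hf : Measurable (fun r : ℝ => g (Real.sqrt (r ^ 2 + s ^ 2))) :=
    hg.comp (Real.continuous_sqrt.measurable.comp
      ((measurable_id.pow_const 2).add_const (s ^ 2)))
  rw [sub_aux k hk s hs g, show ENNReal.ofReal (sphereVol k)
      = (volume : Measure (EuclideanSpace ℝ (Fin k))).toSphere univ from
      (sphere_aux k hk).symm]
  exact polar_aux k hk _ hf
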